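/- Let G be a bipartite graph on vertex classes of sizes v and w containing no cycle of length 4 or 6. If every vertex of G has degree at least 2, then w ≤ ⌊v^2/4⌋ and v ≤ ⌊w^2/4⌋. -/

import Mathlib

open Finset SimpleGraph

lemma mantel {V : Type*} [Fintype V] [DecidableEq V] (G : SimpleGraph V) [DecidableRel G.Adj]
    (h : ∀ x y z, G.Adj x y → G.Adj y z → G.Adj x z → False) :
    G.edgeFinset.card ≤ (Fintype.card V) ^ 2 / 4 := by
  classical
  set n := Fintype.card V with hn
  set e := #G.edgeFinset with he
  have hdeg : ∀ x, #(univ.filter (G.Adj x)) = G.degree x := by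
    intro x; rw [← neighborFinset_eq_filter]; rfl
  have hdisj : ∀ x y, G.Adj x y → G.degree x + G.degree y ≤ n := by
    intro x y hxy
    have hd : Disjoint (G.neighborFinset x) (G.neighborFinset y) := by
      rw [Finset.disjoint_left]
      intro z hzx hzy
      rw [mem_neighborFinset] at hzx hzy
      exact h x y z hxy hzy hzx
    calc G.degree x + G.degree y
        = #(G.neighborFinset x ∪ G.neighborFinset y) := (card_union_of_disjoint hd).symm
      _ ≤ #(univ : Finset V) := card_le_card (subset_univ _)
  have hswap : ∀ f : V → ℕ,
      ∑ x, ∑ y ∈ univ.filter (G.Adj x), f y = ∑ y, ∑ x ∈ univ.filter (G.Adj y), f y := by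
    intro f
    simp only [Finset.sum_filter]
    rw [Finset.sum_comm]
    refine Finset.sum_congr rfl fun y _ => Finset.sum_congr rfl fun x _ => ?_
    by_cases hxy : G.Adj x y
    · simp [hxy, hxy.symm]
    · have h2 : ¬ G.Adj y x := fun hc => hxy hc.symm
      simp [hxy, h2]
  have hsum : ∑ x, G.degree x = 2 * e := G.sum_degrees_eq_twice_card_edges
  have key1 : ∑ x, ∑ _y ∈ univ.filter (G.Adj x), G.degree x = ∑ x, G.degree x ^ 2 := by
    refine Finset.sum_congr rfl fun x _ => ?_
    rw [Finset.sum_const, smul_eq_mul, hdeg x, sq]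
  have key2 : ∑ x, ∑ y ∈ univ.filter (G.Adj x), G.degree y = ∑ x, G.degree x ^ 2 := by
    rw [hswap]
    refine Finset.sum_congr rfl fun y _ => ?_
    rw [Finset.sum_const, smul_eq_mul, hdeg y, sq]
  have hup : ∑ x, ∑ y ∈ univ.filter (G.Adj x), (G.degree x + G.degree y) ≤ 2 * (e * n) := by
    calc ∑ x, ∑ y ∈ univ.filter (G.Adj x), (G.degree x + G.degree y)
        ≤ ∑ x, ∑ _y ∈ univ.filter (G.Adj x), n := by
          refine Finset.sum_le_sum fun x _ => Finset.sum_le_sum fun y hy => ?_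
          rw [Finset.mem_filter] at hy
          exact hdisj x y hy.2
      _ = ∑ x, G.degree x * n := by
          refine Finset.sum_congr rfl fun x _ => ?_
          rw [Finset.sum_const, smul_eq_mul, hdeg x]
      _ = (∑ x, G.degree x) * n := by rw [Finset.sum_mul]
      _ = 2 * (e * n) := by rw [hsum]; ring
  have hdd : 2 * ∑ x, G.degree x ^ 2 ≤ 2 * (e * n) := by
    have : ∑ x, ∑ y ∈ univ.filter (G.Adj x), (G.degree x + G.degree y)
        = 2 * ∑ x, G.degree x ^ 2 := by
      simp only [Finset.sum_add_distrib]
      rw [key1, key2]; ring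
    omega
  have hsq : ∑ x, G.degree x ^ 2 ≤ e * n := by omega
  have hcs : (∑ x, G.degree x) ^ 2 ≤ n * ∑ x, G.degree x ^ 2 := by
    have := sq_sum_le_card_mul_sum_sq (s := (univ : Finset V))
      (f := fun x => (G.degree x : ℤ))
    have hc : #(univ : Finset V) = n := by simp [hn]
    rw [hc] at this
    exact_mod_cast this
  have final : 4 * e ^ 2 ≤ n ^ 2 * e := by
    calc 4 * e ^ 2 = (2 * e) ^ 2 := by ring
      _ = (∑ x, G.degree x) ^ 2 := by rw [hsum]
      _ ≤ n * ∑ x, G.degree x ^ 2 := hcs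
      _ ≤ n * (e * n) := Nat.mul_le_mul_left n hsq
      _ = n ^ 2 * e := by ring
  rcases Nat.eq_zero_or_pos e with h0 | h0
  · simp [h0]
  · have h4e : 4 * e ≤ n ^ 2 := by
      have := Nat.le_of_mul_le_mul_right (by calc 4 * e * e = 4 * e ^ 2 := by ring
        _ ≤ n ^ 2 * e := final) h0
      exact this
    rw [Nat.le_div_iff_mul_le (by norm_num)]
    omega

lemma keylem {α β : Type*} [Fintype α] [DecidableEq α] [Fintype β] [DecidableEq β]
    (r : β → α → Prop)
    (hdeg : ∀ b, ∃ a a', a ≠ a' ∧ r b a ∧ r b a')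
    (h4 : ∀ a a' b b', a ≠ a' → b ≠ b' → r b a → r b a' → r b' a → r b' a' → False)
    (h6 : ∀ x y z b1 b2 b3, x ≠ y → x ≠ z → y ≠ z → b1 ≠ b2 → b1 ≠ b3 → b2 ≠ b3 →
      r b1 x → r b1 y → r b2 y → r b2 z → r b3 z → r b3 x → False) :
    Fintype.card β ≤ (Fintype.card α) ^ 2 / 4 := by
  classical
  choose a1 a2 hne hr1 hr2 using hdeg
  let H : SimpleGraph α := SimpleGraph.fromRel (fun x y => ∃ b, a1 b = x ∧ a2 b = y)
  have hw : ∀ x y, H.Adj x y → x ≠ y ∧ ∃ b, s(a1 b, a2 b) = s(x, y) := by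
    intro x y hxy
    rw [SimpleGraph.fromRel_adj] at hxy
    obtain ⟨hne', hb⟩ := hxy
    refine ⟨hne', ?_⟩
    rcases hb with ⟨b, u, v⟩ | ⟨b, u, v⟩
    · exact ⟨b, by rw [u, v]⟩
    · exact ⟨b, by rw [u, v]; exact Sym2.eq_swap⟩
  have hpair : ∀ b x y, s(a1 b, a2 b) = s(x, y) → r b x ∧ r b y := by
    intro b x y hxy
    rw [Sym2.eq_iff] at hxy
    rcases hxy with ⟨u, v⟩ | ⟨u, v⟩
    · rw [← u, ← v]; exact ⟨hr1 b, hr2 b⟩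
    · rw [← u, ← v]; exact ⟨hr2 b, hr1 b⟩
  have hinj : ∀ b b', s(a1 b, a2 b) = s(a1 b', a2 b') → b = b' := by
    intro b b' hbb'
    by_contra hne'
    obtain ⟨hx, hy⟩ := hpair b' (a1 b) (a2 b) hbb'.symm
    exact h4 (a1 b) (a2 b) b b' (hne b) hne' (hr1 b) (hr2 b) hx hy
  have htri : ∀ x y z, H.Adj x y → H.Adj y z → H.Adj x z → False := by
    intro x y z hxy hyz hxz
    obtain ⟨nxy, b1, e1⟩ := hw x y hxy
    obtain ⟨nyz, b2, e2⟩ := hw y z hyz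
    obtain ⟨nxz, b3, e3⟩ := hw x z hxz
    have d12 : b1 ≠ b2 := by
      rintro rfl
      have := e1.symm.trans e2
      rw [Sym2.eq_iff] at this
      rcases this with ⟨u, _⟩ | ⟨u, _⟩
      · exact nxy u
      · exact nxz u
    have d13 : b1 ≠ b3 := by
      rintro rfl
      have := e1.symm.trans e3
      rw [Sym2.eq_iff] at this
      rcases this with ⟨_, u⟩ | ⟨u, v⟩
      · exact nyz u
      · exact nxy v.symm
    have d23 : b2 ≠ b3 := by
      rintro rfl
      have := e2.symm.trans e3
      rw [Sym2.eq_iff] at this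
      rcases this with ⟨u, _⟩ | ⟨u, _⟩
      · exact nxy u.symm
      · exact nyz u
    obtain ⟨r1x, r1y⟩ := hpair b1 x y e1
    obtain ⟨r2y, r2z⟩ := hpair b2 y z e2
    obtain ⟨r3x, r3z⟩ := hpair b3 x z e3
    exact h6 x y z b1 b2 b3 nxy nxz nyz d12 d13 d23 r1x r1y r2y r2z r3z r3x
  have hcard : Fintype.card β ≤ #H.edgeFinset := by
    rw [← Finset.card_univ (α := β)]
    refine Finset.card_le_card_of_injOn (fun b => s(a1 b, a2 b)) ?_ ?_
    · intro b _
      rw [Finset.mem_coe, mem_edgeFinset, mem_edgeSet]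
      exact SimpleGraph.fromRel_adj .. |>.mpr ⟨hne b, Or.inl ⟨b, rfl, rfl⟩⟩
    · intro b _ b' _ h
      exact hinj b b' h
  refine hcard.trans (mantel H htri)


lemma cycle4 {V : Type*} {G : SimpleGraph V} {p x q y : V}
    (hpq : p ≠ q) (hxy : x ≠ y) (hpx : p ≠ x) (hpy : p ≠ y) (hqx : q ≠ x) (hqy : q ≠ y)
    (h1 : G.Adj p x) (h2 : G.Adj x q) (h3 : G.Adj q y) (h4 : G.Adj y p) :
    ∃ c : G.Walk p p, c.IsCycle ∧ c.length = 4 := by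
  refine ⟨.cons h1 (.cons h2 (.cons h3 (.cons h4 .nil))), ?_, rfl⟩
  simp only [Walk.isCycle_def, Walk.isTrail_def, Walk.edges_cons, Walk.edges_nil,
    Walk.support_cons, Walk.support_nil, List.tail_cons, List.nodup_cons, List.mem_cons,
    List.not_mem_nil, List.nodup_nil, or_false, and_true, not_or, Sym2.eq, Sym2.rel_iff',
    Prod.mk.injEq, Prod.swap_prod_mk, ne_eq]
  refine ⟨⟨?_,?_,?_⟩,?_,?_⟩ <;> try (push_neg; tauto)

lemma cycle6 {V : Type*} {G : SimpleGraph V} {p x q y r z : V}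
    (h1 : G.Adj p x) (h2 : G.Adj x q) (h3 : G.Adj q y) (h4 : G.Adj y r)
    (h5 : G.Adj r z) (h6 : G.Adj z p)
    (hpq : p ≠ q) (hpr : p ≠ r) (hqr : q ≠ r) (hxy : x ≠ y) (hxz : x ≠ z) (hyz : y ≠ z)
    (hpx : p ≠ x) (hpy : p ≠ y) (hpz : p ≠ z) (hqx : q ≠ x) (hqy : q ≠ y) (hqz : q ≠ z)
    (hrx : r ≠ x) (hry : r ≠ y) (hrz : r ≠ z) :
    ∃ c : G.Walk p p, c.IsCycle ∧ c.length = 6 := by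
  refine ⟨.cons h1 (.cons h2 (.cons h3 (.cons h4 (.cons h5 (.cons h6 .nil))))), ?_, rfl⟩
  simp only [Walk.isCycle_def, Walk.isTrail_def, Walk.edges_cons, Walk.edges_nil,
    Walk.support_cons, Walk.support_nil, List.tail_cons, List.nodup_cons, List.mem_cons,
    List.not_mem_nil, List.nodup_nil, or_false, and_true, not_or, Sym2.eq, Sym2.rel_iff',
    Prod.mk.injEq, Prod.swap_prod_mk, ne_eq]
  push_neg
  tauto

theorem stmt_5 (v w : ℕ) (G : SimpleGraph (Fin v ⊕ Fin w)) [DecidableRel G.Adj]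
    (hbip : ∀ x y, G.Adj x y → x.isLeft ≠ y.isLeft)
    (h4 : ∀ (x) (c : G.Walk x x), c.IsCycle → c.length ≠ 4)
    (h6 : ∀ (x) (c : G.Walk x x), c.IsCycle → c.length ≠ 6)
    (hdeg : ∀ x, 2 ≤ G.degree x) :
    w ≤ v^2 / 4 ∧ v ≤ w^2 / 4 := by
  classical
  have two_nbrs : ∀ x : Fin v ⊕ Fin w, ∃ u u', u ≠ u' ∧ G.Adj x u ∧ G.Adj x u' := by
    intro x
    have h2 : 1 < #(G.neighborFinset x) := by
      have := hdeg x
      rw [← card_neighborFinset_eq_degree] at this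
      omega
    obtain ⟨u, hu, u', hu', hne⟩ := Finset.one_lt_card.mp h2
    exact ⟨u, u', hne, (mem_neighborFinset ..).mp hu, (mem_neighborFinset ..).mp hu'⟩
  -- first inequality : w ≤ v^2/4
  have hW : w ≤ v ^ 2 / 4 := by
    have hdegW : ∀ b : Fin w, ∃ a a', a ≠ a' ∧
        G.Adj (.inl a) (.inr b) ∧ G.Adj (.inl a') (.inr b) := by
      intro b
      obtain ⟨u, u', hne, hu, hu'⟩ := two_nbrs (Sum.inr b)
      have hl : ∀ z, G.Adj (Sum.inr b) z → ∃ a, z = Sum.inl a := by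
        intro z hz
        have := hbip _ _ hz
        cases z with
        | inl a => exact ⟨a, rfl⟩
        | inr c => simp at this
      obtain ⟨a, rfl⟩ := hl u hu
      obtain ⟨a', rfl⟩ := hl u' hu'
      exact ⟨a, a', by simpa using hne, hu.symm, hu'.symm⟩
    have h4W : ∀ (a a' : Fin v) (b b' : Fin w), a ≠ a' → b ≠ b' →
        G.Adj (.inl a) (.inr b) → G.Adj (.inl a') (.inr b) →
        G.Adj (.inl a) (.inr b') → G.Adj (.inl a') (.inr b') → False := by
      intro a a' b b' ha hb r1 r2 r3 r4
      obtain ⟨c, hc, hlen⟩ := cycle4 (G := G) (p := .inl a) (x := .inr b)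
        (q := .inl a') (y := .inr b')
        (by simpa using ha) (by simpa using hb) (by simp) (by simp) (by simp) (by simp)
        r1 r2.symm r4 r3.symm
      exact h4 _ c hc hlen
    have h6W : ∀ (x y z : Fin v) (b1 b2 b3 : Fin w), x ≠ y → x ≠ z → y ≠ z →
        b1 ≠ b2 → b1 ≠ b3 → b2 ≠ b3 →
        G.Adj (.inl x) (.inr b1) → G.Adj (.inl y) (.inr b1) →
        G.Adj (.inl y) (.inr b2) → G.Adj (.inl z) (.inr b2) →
        G.Adj (.inl z) (.inr b3) → G.Adj (.inl x) (.inr b3) → False := by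
      intro x y z b1 b2 b3 nxy nxz nyz d12 d13 d23 r1x r1y r2y r2z r3z r3x
      obtain ⟨c, hc, hlen⟩ := cycle6 (G := G) (p := .inl x) (x := .inr b1)
        (q := .inl y) (y := .inr b2) (r := .inl z) (z := .inr b3)
        r1x r1y.symm r2y r2z.symm r3z r3x.symm
        (by simpa using nxy) (by simpa using nxz) (by simpa using nyz)
        (by simpa using d12) (by simpa using d13) (by simpa using d23)
        (by simp) (by simp) (by simp) (by simp) (by simp) (by simp)
        (by simp) (by simp) (by simp)
      exact h6 _ c hc hlen
    have := keylem (fun (b : Fin w) (a : Fin v) => G.Adj (.inl a) (.inr b))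
      hdegW
      (fun a a' b b' ha hb r1 r2 r3 r4 => h4W a a' b b' ha hb r1 r2 r3 r4)
      (fun x y z b1 b2 b3 nxy nxz nyz d12 d13 d23 p1 p2 p3 p4 p5 p6 =>
        h6W x y z b1 b2 b3 nxy nxz nyz d12 d13 d23 p1 p2 p3 p4 p5 p6)
    simpa using this
  have hV : v ≤ w ^ 2 / 4 := by
    have hdegV : ∀ a : Fin v, ∃ b b', b ≠ b' ∧
        G.Adj (.inr b) (.inl a) ∧ G.Adj (.inr b') (.inl a) := by
      intro a
      obtain ⟨u, u', hne, hu, hu'⟩ := two_nbrs (Sum.inl a)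
      have hl : ∀ z, G.Adj (Sum.inl a) z → ∃ b, z = Sum.inr b := by
        intro z hz
        have := hbip _ _ hz
        cases z with
        | inl c => simp at this
        | inr b => exact ⟨b, rfl⟩
      obtain ⟨b, rfl⟩ := hl u hu
      obtain ⟨b', rfl⟩ := hl u' hu'
      exact ⟨b, b', by simpa using hne, hu.symm, hu'.symm⟩
    have h4V : ∀ (b b' : Fin w) (a a' : Fin v), b ≠ b' → a ≠ a' →
        G.Adj (.inr b) (.inl a) → G.Adj (.inr b') (.inl a) →
        G.Adj (.inr b) (.inl a') → G.Adj (.inr b') (.inl a') → False := by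
      intro b b' a a' hb ha r1 r2 r3 r4
      obtain ⟨c, hc, hlen⟩ := cycle4 (G := G) (p := .inr b) (x := .inl a)
        (q := .inr b') (y := .inl a')
        (by simpa using hb) (by simpa using ha) (by simp) (by simp) (by simp) (by simp)
        r1 r2.symm r4 r3.symm
      exact h4 _ c hc hlen
    have h6V : ∀ (x y z : Fin w) (b1 b2 b3 : Fin v), x ≠ y → x ≠ z → y ≠ z →
        b1 ≠ b2 → b1 ≠ b3 → b2 ≠ b3 →
        G.Adj (.inr x) (.inl b1) → G.Adj (.inr y) (.inl b1) →
        G.Adj (.inr y) (.inl b2) → G.Adj (.inr z) (.inl b2) →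
        G.Adj (.inr z) (.inl b3) → G.Adj (.inr x) (.inl b3) → False := by
      intro x y z b1 b2 b3 nxy nxz nyz d12 d13 d23 r1x r1y r2y r2z r3z r3x
      obtain ⟨c, hc, hlen⟩ := cycle6 (G := G) (p := .inr x) (x := .inl b1)
        (q := .inr y) (y := .inl b2) (r := .inr z) (z := .inl b3)
        r1x r1y.symm r2y r2z.symm r3z r3x.symm
        (by simpa using nxy) (by simpa using nxz) (by simpa using nyz)
        (by simpa using d12) (by simpa using d13) (by simpa using d23)
        (by simp) (by simp) (by simp) (by simp) (by simp) (by simp)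
        (by simp) (by simp) (by simp)
      exact h6 _ c hc hlen
    have := keylem (fun (a : Fin v) (b : Fin w) => G.Adj (.inr b) (.inl a))
      hdegV
      (fun a a' b b' ha hb r1 r2 r3 r4 => h4V a a' b b' ha hb r1 r2 r3 r4)
      (fun x y z b1 b2 b3 nxy nxz nyz d12 d13 d23 p1 p2 p3 p4 p5 p6 =>
        h6V x y z b1 b2 b3 nxy nxz nyz d12 d13 d23 p1 p2 p3 p4 p5 p6)
    simpa using this
  exact ⟨hW, hV⟩
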